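/- Let a : ℝ → ℝ be continuously differentiable with a and its derivative ∂_x a bounded, and let f : ℝ → ℝ be continuously differentiable with f and ∂_x f square-integrable. Then ∫_ℝ a·f·∂_x f dx = −(1/2)·∫_ℝ (∂_x a)·f² dx (both integrals being absolutely convergent). -/

import Mathlib

open MeasureTheory

/-- Integration by parts for the quadratic highest-order term: if `a` is C¹ with `a`
and `∂ₓa` bounded, and `f` is C¹ with `f` and `∂ₓf` square-integrable, then
∫ a·f·∂ₓf dx = −(1/2)·∫ (∂ₓa)·f² dx, both integrals being absolutely convergent. -/
theorem int_by_parts_quadratic (a f : ℝ → ℝ)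
    (ha : ContDiff ℝ 1 a) (haB : ∃ M, ∀ x, |a x| ≤ M) (haB' : ∃ M, ∀ x, |deriv a x| ≤ M)
    (hf : ContDiff ℝ 1 f)
    (hf2 : Integrable (fun x => (f x) ^ 2))
    (hf2' : Integrable (fun x => (deriv f x) ^ 2)) :
    Integrable (fun x => a x * f x * deriv f x) ∧
    Integrable (fun x => deriv a x * (f x) ^ 2) ∧
    ∫ x : ℝ, a x * f x * deriv f x = -(1 / 2) * ∫ x : ℝ, deriv a x * (f x) ^ 2 := by
  obtain ⟨M, hM⟩ := haB
  obtain ⟨M', hM'⟩ := haB'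
  have hfc : Continuous f := hf.continuous
  have hfc' : Continuous (deriv f) := (hf.iterate_deriv' 0 1).continuous
  have hac : Continuous a := ha.continuous
  have hac' : Continuous (deriv a) := (ha.iterate_deriv' 0 1).continuous
  -- Integrability of a·f·f'
  have I1 : Integrable (fun x => a x * f x * deriv f x) := by
    apply Integrable.mono' ((hf2.add hf2').const_mul (M / 2))
      ((hac.mul hfc).mul hfc').aestronglyMeasurable
    filter_upwards with x
    have h1 := hM x
    have h2 : |a x * f x * deriv f x| = |a x| * (|f x| * |deriv f x|) := by
      rw [abs_mul, abs_mul, mul_assoc]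
    have h3 : |f x| * |deriv f x| ≤ (f x ^ 2 + deriv f x ^ 2) / 2 := by
      nlinarith [sq_nonneg (|f x| - |deriv f x|), sq_abs (f x), sq_abs (deriv f x)]
    have h0 : (0:ℝ) ≤ |a x| := abs_nonneg _
    have h4 : (0:ℝ) ≤ |f x| * |deriv f x| := mul_nonneg (abs_nonneg _) (abs_nonneg _)
    calc ‖a x * f x * deriv f x‖ = |a x| * (|f x| * |deriv f x|) := h2
      _ ≤ M * ((f x ^ 2 + deriv f x ^ 2) / 2) := by
          apply mul_le_mul h1 h3 h4 (le_trans h0 h1)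
      _ = M / 2 * (f x ^ 2 + deriv f x ^ 2) := by ring
  -- Integrability of a'·f²
  have I2 : Integrable (fun x => deriv a x * (f x) ^ 2) := by
    apply Integrable.mono' (hf2.const_mul M') (hac'.mul (hfc.pow 2)).aestronglyMeasurable
    filter_upwards with x
    have h1 := hM' x
    rw [Real.norm_eq_abs, Pi.mul_apply, Pi.pow_apply, abs_mul, abs_of_nonneg (sq_nonneg (f x))]
    exact mul_le_mul_of_nonneg_right h1 (sq_nonneg _)
  -- g = a·f² is integrable
  have hg : Integrable (fun x => a x * (f x) ^ 2) := by
    apply Integrable.mono' (hf2.const_mul M) (hac.mul (hfc.pow 2)).aestronglyMeasurable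
    filter_upwards with x
    rw [Real.norm_eq_abs, Pi.mul_apply, Pi.pow_apply, abs_mul, abs_of_nonneg (sq_nonneg (f x))]
    exact mul_le_mul_of_nonneg_right (hM x) (sq_nonneg _)
  -- derivative of g
  have hderiv : ∀ x, HasDerivAt (fun x => a x * (f x) ^ 2)
      (deriv a x * (f x) ^ 2 + 2 * (a x * f x * deriv f x)) x := by
    intro x
    have h1 : HasDerivAt a (deriv a x) x := (ha.differentiable one_ne_zero x).hasDerivAt
    have h2 : HasDerivAt f (deriv f x) x := (hf.differentiable one_ne_zero x).hasDerivAt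
    have h3 : HasDerivAt (fun x => (f x) ^ 2) (2 * f x ^ 1 * deriv f x) x := by
      simpa using h2.fun_pow 2
    have := h1.fun_mul h3
    exact this.congr_deriv (by ring)
  have hg' : Integrable (fun x => deriv a x * (f x) ^ 2 + 2 * (a x * f x * deriv f x)) :=
    I2.add (I1.const_mul 2)
  have key : ∫ x : ℝ, (deriv a x * (f x) ^ 2 + 2 * (a x * f x * deriv f x)) = 0 :=
    integral_eq_zero_of_hasDerivAt_of_integrable hderiv hg' hg
  rw [integral_add I2 (I1.const_mul 2), MeasureTheory.integral_const_mul] at key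
  exact ⟨I1, I2, by linarith⟩
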